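/- Let m be a positive integer and t a positive integer, and let N_1, …, N_t be nonnegative reals with ∑_{i=1}^t (N_i + 1) = m and ∑_{i=1}^t N_i(N_i + 1) ≤ m·N* for some N* ≥ 0. Then t ≥ m / (N* + 1). -/
import Mathlib

/-- The key counting inequality in the greedy analysis: if
`∑ (N i + 1) = m` and `∑ N i * (N i + 1) ≤ m * N*`, then `t ≥ m / (N* + 1)`. -/
theorem stmt4 (m : ℕ) (t : ℕ) (N : ℕ → ℝ) (Nstar : ℝ)
    (hm : 0 < m) (ht : 0 < t)
    (hN : ∀ i ∈ Finset.range t, 0 ≤ N i) (hNs : 0 ≤ Nstar)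
    (h1 : ∑ i ∈ Finset.range t, (N i + 1) = (m : ℝ))
    (h2 : ∑ i ∈ Finset.range t, N i * (N i + 1) ≤ (m : ℝ) * Nstar) :
    (m : ℝ) / (Nstar + 1) ≤ (t : ℝ) := by
  have hsq : ∑ i ∈ Finset.range t, (N i + 1) ^ 2 ≤ (m : ℝ) * (Nstar + 1) := by
    have : ∑ i ∈ Finset.range t, (N i + 1) ^ 2
        = ∑ i ∈ Finset.range t, N i * (N i + 1) + ∑ i ∈ Finset.range t, (N i + 1) := by
      rw [← Finset.sum_add_distrib]; congr 1; ext i; ring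
    rw [this, h1]; linarith
  have hcs := sq_sum_le_card_mul_sum_sq (s := Finset.range t) (f := fun i => N i + 1)
  rw [h1, Finset.card_range] at hcs
  have hmpos : (0:ℝ) < m := by exact_mod_cast hm
  have htpos : (0:ℝ) < t := by exact_mod_cast ht
  have : (m:ℝ)^2 ≤ t * ((m:ℝ) * (Nstar + 1)) :=
    hcs.trans (by apply mul_le_mul_of_nonneg_left hsq htpos.le)
  rw [div_le_iff₀ (by linarith)]
  nlinarith
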